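/- Let θ be a nonempty rim with θ̂ ≠ ∅ whose north-east arm is not connected to θ̂, and set a = |θ| - |θ̂|. Then for every integer p ≥ 1: if p < a then B(θ,p) = 0, and if p ≥ a then B(θ,p) = (2 - δ_{p,a})·(B(θ̂,p-a) - B(θ̂,p-a+1)) + (1 - δ_{a,1})·(B(θ̂,p-a+2) - B(θ̂,p-a+1)), where δ denotes the Kronecker delta. -/

import Mathlib

/-- `hcoef a b = Σ_{j=0}^{min(a,b)} (-1)^j 2^{a-j} binom(a,j)`; it is `0` when `b < 0`. -/
def hcoef (a : ℕ) (b : ℤ) : ℤ :=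
  ∑ j ∈ Finset.range (a + 1),
    if (j : ℤ) ≤ b then (-1) ^ j * 2 ^ (a - j) * (a.choose j) else 0

attribute [local instance] Classical.propDecidable

/-- The south-east corners of a finite set of boxes: boxes `(i,j)` such that
neither `(i+1,j)` nor `(i,j+1)` belongs to the set. -/
def seCorners (θ : Finset (ℤ × ℤ)) : Finset (ℤ × ℤ) :=
  θ.filter fun b => (b.1 + 1, b.2) ∉ θ ∧ (b.1, b.2 + 1) ∉ θ

/-- The south-east rim of `θ`: boxes `(i,j) ∈ θ` such that no box `(i',j') ∈ θ`
has `i' > i` and `j' > j`. -/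
def seRim (θ : Finset (ℤ × ℤ)) : Finset (ℤ × ℤ) :=
  θ.filter fun b => ∀ b' ∈ θ, ¬ (b.1 < b'.1 ∧ b.2 < b'.2)

/-- `d(θ)`: the number of boxes in the south-east rim of `θ`. -/
def dRim (θ : Finset (ℤ × ℤ)) : ℕ := (seRim θ).card

/-- `θ` is a rim if it equals its own south-east rim. -/
def IsRim (θ : Finset (ℤ × ℤ)) : Prop := θ = seRim θ

/-- Two boxes are adjacent (connected) if they share a side. -/
def Adjacent (b b' : ℤ × ℤ) : Prop := |b.1 - b'.1| + |b.2 - b'.2| = 1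

/-- `b'` can be reached from `b` by a chain of adjacent boxes of `θ`. -/
def Reach (θ : Finset (ℤ × ℤ)) (b b' : ℤ × ℤ) : Prop :=
  Relation.ReflTransGen (fun x y => y ∈ θ ∧ Adjacent x y) b b'

/-- The connected components of `θ`. -/
noncomputable def comps (θ : Finset (ℤ × ℤ)) : Finset (Finset (ℤ × ℤ)) :=
  θ.image fun b => θ.filter fun b' => Reach θ b b'

/-- `N(θ)`: the number of connected components of `θ`. -/
noncomputable def Ncomp (θ : Finset (ℤ × ℤ)) : ℕ := (comps θ).card

/-- `N⁻(θ) = max(N(θ) - 1, 0)`. -/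
noncomputable def Nminus (θ : Finset (ℤ × ℤ)) : ℕ := Ncomp θ - 1

/-- `N'(θ)`: the number of connected components of `θ` containing no diagonal box. -/
noncomputable def Nprime (θ : Finset (ℤ × ℤ)) : ℕ :=
  ((comps θ).filter fun c => ∀ b ∈ c, b.1 ≠ b.2).card

/-- `B(θ,p) = Σ_S (-1)^{|S|} h(N⁻(θ∖S), d(θ∖S) - p)`, the sum over subsets `S`
of the set of south-east corners of `θ`. -/
noncomputable def Bcoef (θ : Finset (ℤ × ℤ)) (p : ℤ) : ℤ :=
  ∑ S ∈ (seCorners θ).powerset,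
    (-1) ^ S.card * hcoef (Nminus (θ \ S)) ((dRim (θ \ S) : ℤ) - p)

/-- `C(θ,p) = Σ_S (-1)^{|S|} h(N'(θ∖S), d(θ∖S) - p)`, the sum over subsets `S`
of the set of south-east corners of `θ`. -/
noncomputable def Ccoef (θ : Finset (ℤ × ℤ)) (p : ℤ) : ℤ :=
  ∑ S ∈ (seCorners θ).powerset,
    (-1) ^ S.card * hcoef (Nprime (θ \ S)) ((dRim (θ \ S) : ℤ) - p)

/-- A strict partition with largest part at most `n`, encoded as a function
with `lam i = 0` for `i` beyond the length. -/
def IsStrictPartition (n : ℕ) (lam : ℤ → ℤ) : Prop :=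
  lam 1 ≤ (n : ℤ) ∧ (∀ i : ℤ, 1 ≤ i → 0 ≤ lam i) ∧
  (∀ i : ℤ, 1 ≤ i → lam (i + 1) = 0 ∨ lam (i + 1) < lam i)

/-- The shifted Young diagram `{(i,j) : 1 ≤ i ≤ ℓ, i ≤ j ≤ λ_i + i - 1}` of a
strict partition. -/
noncomputable def shiftedD (n : ℕ) (lam : ℤ → ℤ) : Finset (ℤ × ℤ) :=
  (Finset.Icc (1 : ℤ) (n : ℤ) ×ˢ Finset.Icc (1 : ℤ) (2 * (n : ℤ))).filter
    fun b => b.1 ≤ b.2 ∧ b.2 ≤ lam b.1 + b.1 - 1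

/-- `θ` is a shifted skew diagram: `θ = ν/λ` for strict partitions `λ ⊆ ν`
with `ν_1 ≤ n`. -/
def IsShiftedSkewDiagram (n : ℕ) (θ : Finset (ℤ × ℤ)) : Prop :=
  ∃ lam nu : ℤ → ℤ, IsStrictPartition n lam ∧ IsStrictPartition n nu ∧
    (∀ i : ℤ, 1 ≤ i → lam i ≤ nu i) ∧ θ = shiftedD n nu \ shiftedD n lam

/-- All boxes of `φ` lie in a single row. -/
def IsRow (φ : Finset (ℤ × ℤ)) : Prop := ∃ i : ℤ, ∀ b ∈ φ, b.1 = i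

/-- All boxes of `φ` lie in a single column. -/
def IsCol (φ : Finset (ℤ × ℤ)) : Prop := ∃ j : ℤ, ∀ b ∈ φ, b.2 = j

/-- `φ` is a row or a column. -/
def IsRowOrCol (φ : Finset (ℤ × ℤ)) : Prop := IsRow φ ∨ IsCol φ

/-- The intersection of `θ` with the `s × s` square whose upper-right box
is `(i0, j0)`. -/
def armAt (θ : Finset (ℤ × ℤ)) (i0 j0 : ℤ) (s : ℕ) : Finset (ℤ × ℤ) :=
  θ.filter fun b =>
    i0 ≤ b.1 ∧ b.1 ≤ i0 + (s : ℤ) - 1 ∧ j0 - (s : ℤ) + 1 ≤ b.2 ∧ b.2 ≤ j0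


/-! ### Auxiliary lemmas -/

section Aux

lemma hcoef_neg (a : ℕ) {b : ℤ} (hb : b < 0) : hcoef a b = 0 := by
  apply Finset.sum_eq_zero
  intro j hj
  rw [if_neg]
  intro h
  have : (0:ℤ) ≤ j := Int.ofNat_nonneg j
  omega

lemma hcoef_of_le (a : ℕ) {b : ℤ} (hb : (a:ℤ) ≤ b) : hcoef a b = 1 := by
  have h1 : hcoef a b = ∑ j ∈ Finset.range (a + 1), (-1:ℤ) ^ j * 2 ^ (a - j) * (a.choose j) := by
    apply Finset.sum_congr rfl
    intro j hj
    rw [if_pos]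
    have hj' := Finset.mem_range.mp hj
    have : (j:ℤ) ≤ a := by exact_mod_cast Nat.lt_succ_iff.mp hj'
    omega
  rw [h1]
  have h := add_pow (-1 : ℤ) 2 a
  norm_num at h
  rw [← h]

lemma hcoef_zero_arg (y : ℤ) : hcoef 0 y = if 0 ≤ y then 1 else 0 := by
  simp [hcoef]

lemma hcoef_succ (k : ℕ) (y : ℤ) :
    hcoef (k+1) y = 2 * hcoef k y - hcoef k (y-1) := by
  have e1 : hcoef (k+1) y
      = (∑ i ∈ Finset.range (k+1),
          (if ((i:ℤ)+1) ≤ y then (-1) ^ (i+1) * 2 ^ (k - i) * ((k.choose i : ℤ) + (k.choose (i+1) : ℤ)) else 0))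
        + (if (0:ℤ) ≤ y then 2 ^ (k+1) else 0) := by
    rw [hcoef, Finset.sum_range_succ']
    congr 1
    · apply Finset.sum_congr rfl
      intro i hi
      have hc : ((k+1).choose (i+1) : ℤ) = (k.choose i : ℤ) + (k.choose (i+1) : ℤ) := by
        rw [Nat.choose_succ_succ]; push_cast; ring
      simp only [hc]
      congr 1
      · push_cast; ring_nf
    · simp
  have split : ∀ i : ℕ, (if ((i:ℤ)+1) ≤ y then (-1:ℤ)^(i+1) * 2^(k-i) * ((k.choose i:ℤ) + (k.choose (i+1):ℤ)) else 0)
      = (if ((i:ℤ)) ≤ y-1 then (-1:ℤ)^(i+1) * 2^(k-i) * (k.choose i:ℤ) else 0)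
      + (if ((i:ℤ)+1) ≤ y then (-1:ℤ)^(i+1) * 2^(k-i) * (k.choose (i+1):ℤ) else 0) := by
    intro i; by_cases h : ((i:ℤ)+1) ≤ y
    · rw [if_pos h, if_pos (by omega), if_pos h]; ring
    · rw [if_neg h, if_neg (by omega), if_neg h]; ring
  rw [e1]
  simp only [split]
  rw [Finset.sum_add_distrib]
  have eA : (∑ i ∈ Finset.range (k+1),
      (if ((i:ℤ)) ≤ y-1 then (-1:ℤ)^(i+1) * 2^(k-i) * (k.choose i:ℤ) else 0)) = - hcoef k (y-1) := by
    rw [hcoef, ← Finset.sum_neg_distrib]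
    apply Finset.sum_congr rfl
    intro i hi
    by_cases h : ((i:ℤ)) ≤ y-1
    · rw [if_pos h, if_pos h]; ring
    · rw [if_neg h, if_neg h]; ring
  have eB : (∑ i ∈ Finset.range (k+1),
      (if ((i:ℤ)+1) ≤ y then (-1:ℤ)^(i+1) * 2^(k-i) * (k.choose (i+1):ℤ) else 0))
      + (if (0:ℤ) ≤ y then (2:ℤ) ^ (k+1) else 0) = 2 * hcoef k y := by
    rw [hcoef, Finset.mul_sum]
    rw [show (∑ j ∈ Finset.range (k+1), 2 * if ((j:ℤ)) ≤ y then (-1:ℤ)^j * 2^(k-j) * (k.choose j:ℤ) else 0)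
        = ∑ j ∈ Finset.range (k+1), (if ((j:ℤ)) ≤ y then 2 * ((-1:ℤ)^j * 2^(k-j) * (k.choose j:ℤ)) else 0) from
      Finset.sum_congr rfl (fun j _ => by by_cases h : ((j:ℤ)) ≤ y <;> simp [h])]
    rw [Finset.sum_range_succ' (fun j => if ((j:ℤ)) ≤ y then 2 * ((-1:ℤ)^j * 2^(k-j) * (k.choose j:ℤ)) else 0) k]
    rw [Finset.sum_range_succ]
    have hlast : (if ((k:ℤ)+1) ≤ y then (-1:ℤ)^(k+1) * 2^(k-k) * (k.choose (k+1):ℤ) else 0) = 0 := by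
      simp [Nat.choose_succ_self]
    rw [hlast, add_zero]
    congr 1
    · apply Finset.sum_congr rfl
      intro i hi
      have hik : i < k := Finset.mem_range.mp hi
      by_cases h : ((i:ℤ)+1) ≤ y
      · rw [if_pos (by omega), if_pos (by omega)]
        have : k - i = (k - (i+1)) + 1 := by omega
        rw [this]; push_cast; ring
      · rw [if_neg (by omega), if_neg (by omega)]
    · by_cases h : (0:ℤ) ≤ y
      · rw [if_pos h, if_pos (by omega)]; simp [Nat.choose_zero_right]; ring
      · rw [if_neg h, if_neg (by omega)]
  rw [eA]
  rw [add_comm, ← add_assoc] at *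
  linarith [eB]

lemma hcoef_key (N : ℕ) (y : ℤ) :
    hcoef N y = 2 * hcoef (N-1) y - hcoef (N-1) (y-1) - (if N = 0 ∧ y = 0 then 1 else 0) := by
  cases N with
  | zero =>
      simp only [Nat.zero_sub, hcoef_zero_arg, true_and]
      split_ifs <;> omega
  | succ k =>
      simp only [Nat.succ_sub_one]
      rw [hcoef_succ]
      rw [if_neg (by simp)]
      ring

lemma adjacent_symm {b b' : ℤ × ℤ} (h : Adjacent b b') : Adjacent b' b := by
  unfold Adjacent at *
  rw [abs_sub_comm b'.1 b.1, abs_sub_comm b'.2 b.2]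
  exact h

lemma adjacent_row (i j : ℤ) : Adjacent (i, j) (i, j+1) := by
  unfold Adjacent
  simp only
  rw [show i - i = 0 from by ring, show j - (j+1) = -1 from by ring]
  norm_num

lemma adjacent_col (i j : ℤ) : Adjacent (i, j) (i+1, j) := by
  unfold Adjacent
  simp only
  rw [show j - j = 0 from by ring, show i - (i+1) = -1 from by ring]
  norm_num

lemma reach_mem {θ : Finset (ℤ × ℤ)} {b x : ℤ × ℤ} (hb : b ∈ θ) (h : Reach θ b x) : x ∈ θ := by
  induction h with
  | refl => exact hb
  | tail _ h2 _ => exact h2.1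

lemma reach_symm {θ : Finset (ℤ × ℤ)} {b x : ℤ × ℤ} (hb : b ∈ θ) (h : Reach θ b x) :
    Reach θ x b := by
  induction h with
  | refl => exact Relation.ReflTransGen.refl
  | @tail c d h1 h2 ih =>
      exact Relation.ReflTransGen.head ⟨reach_mem hb h1, adjacent_symm h2.2⟩ ih

lemma reach_mono {θ₁ θ₂ : Finset (ℤ × ℤ)} (hsub : θ₁ ⊆ θ₂) {b x : ℤ × ℤ}
    (h : Reach θ₁ b x) : Reach θ₂ b x := by
  unfold Reach at h ⊢
  induction h with
  | refl => exact Relation.ReflTransGen.refl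
  | tail _ h2 ih => exact ih.tail ⟨hsub h2.1, h2.2⟩

lemma ncomp_empty : Ncomp (∅ : Finset (ℤ × ℤ)) = 0 := by simp [Ncomp, comps]

lemma ncomp_le_card (θ : Finset (ℤ × ℤ)) : Ncomp θ ≤ θ.card := Finset.card_image_le

lemma ncomp_eq_zero_iff (θ : Finset (ℤ × ℤ)) : Ncomp θ = 0 ↔ θ = ∅ := by
  constructor
  · intro h
    by_contra hne
    have hne' : θ.Nonempty := Finset.nonempty_iff_ne_empty.mpr hne
    have : (comps θ).Nonempty := by
      obtain ⟨b, hb⟩ := hne'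
      exact ⟨_, Finset.mem_image_of_mem _ hb⟩
    rw [Ncomp, Finset.card_eq_zero] at h
    rw [h] at this
    exact Finset.not_nonempty_empty this
  · intro h; rw [h]; exact ncomp_empty

lemma ncomp_eq_one {θ : Finset (ℤ × ℤ)} (hne : θ.Nonempty)
    (hr : ∀ b ∈ θ, ∀ b' ∈ θ, Reach θ b b') : Ncomp θ = 1 := by
  rw [Ncomp, comps]
  have h1 : ∀ b ∈ θ, (θ.filter fun b' => Reach θ b b') = θ := by
    intro b hb
    apply Finset.filter_true_of_mem
    intro x hx
    exact hr b hb x hx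
  rw [Finset.image_congr (fun b hb => h1 b (by simpa using hb))]
  rw [Finset.image_const hne]
  simp

lemma comps_mem_subset {θ c : Finset (ℤ × ℤ)} (h : c ∈ comps θ) : c ⊆ θ ∧ c.Nonempty := by
  rw [comps, Finset.mem_image] at h
  obtain ⟨b, hb, rfl⟩ := h
  exact ⟨Finset.filter_subset _ _, ⟨b, Finset.mem_filter.mpr ⟨hb, Relation.ReflTransGen.refl⟩⟩⟩

lemma ncomp_union {θ₁ θ₂ : Finset (ℤ × ℤ)} (hd : Disjoint θ₁ θ₂)
    (hadj : ∀ b ∈ θ₁, ∀ b' ∈ θ₂, ¬ Adjacent b b') :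
    Ncomp (θ₁ ∪ θ₂) = Ncomp θ₁ + Ncomp θ₂ := by
  have key₁ : ∀ b ∈ θ₁, ∀ x, Reach (θ₁ ∪ θ₂) b x → x ∈ θ₁ ∧ Reach θ₁ b x := by
    intro b hb x h
    induction h with
    | refl => exact ⟨hb, Relation.ReflTransGen.refl⟩
    | @tail c d h1 h2 ih =>
        have hc : c ∈ θ₁ := ih.1
        have hd' : d ∈ θ₁ := by
          rcases Finset.mem_union.mp h2.1 with h | h
          · exact h
          · exact absurd h2.2 (hadj c hc d h)
        exact ⟨hd', ih.2.tail ⟨hd', h2.2⟩⟩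
  have key₂ : ∀ b ∈ θ₂, ∀ x, Reach (θ₁ ∪ θ₂) b x → x ∈ θ₂ ∧ Reach θ₂ b x := by
    intro b hb x h
    induction h with
    | refl => exact ⟨hb, Relation.ReflTransGen.refl⟩
    | @tail c d h1 h2 ih =>
        have hc : c ∈ θ₂ := ih.1
        have hd' : d ∈ θ₂ := by
          rcases Finset.mem_union.mp h2.1 with h | h
          · exact absurd (adjacent_symm h2.2) (hadj d h c hc)
          · exact h
        exact ⟨hd', ih.2.tail ⟨hd', h2.2⟩⟩
  have f₁ : ∀ b ∈ θ₁, ((θ₁ ∪ θ₂).filter fun b' => Reach (θ₁ ∪ θ₂) b b')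
      = θ₁.filter fun b' => Reach θ₁ b b' := by
    intro b hb
    ext x
    simp only [Finset.mem_filter, Finset.mem_union]
    constructor
    · rintro ⟨_, hr⟩
      exact ⟨(key₁ b hb x hr).1, (key₁ b hb x hr).2⟩
    · rintro ⟨hx, hr⟩
      exact ⟨Or.inl hx, reach_mono Finset.subset_union_left hr⟩
  have f₂ : ∀ b ∈ θ₂, ((θ₁ ∪ θ₂).filter fun b' => Reach (θ₁ ∪ θ₂) b b')
      = θ₂.filter fun b' => Reach θ₂ b b' := by
    intro b hb
    ext x
    simp only [Finset.mem_filter, Finset.mem_union]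
    constructor
    · rintro ⟨_, hr⟩
      exact ⟨(key₂ b hb x hr).1, (key₂ b hb x hr).2⟩
    · rintro ⟨hx, hr⟩
      exact ⟨Or.inr hx, reach_mono Finset.subset_union_right hr⟩
  have hc : comps (θ₁ ∪ θ₂) = comps θ₁ ∪ comps θ₂ := by
    rw [comps, Finset.image_union]
    congr 1
    · exact Finset.image_congr (fun b hb => f₁ b (by simpa using hb))
    · exact Finset.image_congr (fun b hb => f₂ b (by simpa using hb))
  rw [Ncomp, hc, Finset.card_union_of_disjoint, Ncomp, Ncomp]
  rw [Finset.disjoint_left]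
  intro c hc1 hc2
  obtain ⟨hs1, hne⟩ := comps_mem_subset hc1
  obtain ⟨hs2, _⟩ := comps_mem_subset hc2
  obtain ⟨b, hb⟩ := hne
  exact Finset.disjoint_left.mp hd (hs1 hb) (hs2 hb)

lemma ncomp_seg (f : ℤ → ℤ × ℤ) (hadj : ∀ x : ℤ, Adjacent (f x) (f (x+1)))
    (c d : ℤ) (h : c ≤ d) : Ncomp ((Finset.Icc c d).image f) = 1 := by
  set A := (Finset.Icc c d).image f with hA
  have hmem : ∀ x, c ≤ x → x ≤ d → f x ∈ A := by
    intro x h1 h2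
    exact Finset.mem_image_of_mem f (Finset.mem_Icc.mpr ⟨h1, h2⟩)
  have reach_up : ∀ k : ℕ, ∀ x : ℤ, c ≤ x → x + k ≤ d → Reach A (f x) (f (x + k)) := by
    intro k
    induction k with
    | zero => intro x _ _; simp only [Nat.cast_zero, add_zero]; exact Relation.ReflTransGen.refl
    | succ k ih =>
        intro x h1 h2
        have h2' : x + k ≤ d := by push_cast at h2 ⊢; omega
        have step : Reach A (f (x + k)) (f ((x + k) + 1)) :=
          Relation.ReflTransGen.single ⟨hmem _ (by omega) (by push_cast at h2 ⊢; omega), hadj _⟩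
        have goal := (ih x h1 h2').trans step
        have hc2 : x + ((k+1 : ℕ) : ℤ) = (x + k) + 1 := by push_cast; ring
        rw [hc2]
        exact goal
  apply ncomp_eq_one
  · exact ⟨f c, hmem c le_rfl h⟩
  · intro b hb b' hb'
    obtain ⟨x, hx, rfl⟩ := Finset.mem_image.mp hb
    obtain ⟨y, hy, rfl⟩ := Finset.mem_image.mp hb'
    rw [Finset.mem_Icc] at hx hy
    rcases le_total x y with hxy | hxy
    · have := reach_up (y - x).toNat x hx.1 (by omega)
      rwa [show x + ((y-x).toNat : ℤ) = y by omega] at this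
    · have := reach_up (x - y).toNat y hy.1 (by omega)
      rw [show y + ((x-y).toNat : ℤ) = x by omega] at this
      exact reach_symm (hmem y hy.1 hy.2) this

lemma seg_erase (f : ℤ → ℤ × ℤ) (hf : Function.Injective f) (c d : ℤ) :
    ((Finset.Icc c d).image f).erase (f d) = (Finset.Icc c (d-1)).image f := by
  ext b
  simp only [Finset.mem_erase, Finset.mem_image, Finset.mem_Icc]
  constructor
  · rintro ⟨hne, x, ⟨h1, h2⟩, rfl⟩
    exact ⟨x, ⟨h1, by
      have : x ≠ d := fun h => hne (by rw [h])
      omega⟩, rfl⟩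
  · rintro ⟨x, ⟨h1, h2⟩, rfl⟩
    refine ⟨fun h => ?_, x, ⟨h1, by omega⟩, rfl⟩
    have := hf h
    omega

lemma dRim_of_subset {θ φ : Finset (ℤ × ℤ)} (hrim : IsRim θ) (hsub : φ ⊆ θ) :
    dRim φ = φ.card := by
  rw [dRim]
  congr 1
  rw [seRim]
  apply Finset.filter_true_of_mem
  intro b hb b' hb'
  have hbθ := hsub hb
  rw [hrim, seRim, Finset.mem_filter] at hbθ
  exact hbθ.2 b' (by
    have := hsub hb'
    rw [hrim] at this
    exact Finset.filter_subset _ _ this)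

lemma seCorners_nonempty {φ : Finset (ℤ × ℤ)} (hne : φ.Nonempty) :
    (seCorners φ).Nonempty := by
  obtain ⟨b, hb, hmax⟩ := Finset.exists_max_image φ (fun b => b.1 + b.2) hne
  refine ⟨b, Finset.mem_filter.mpr ⟨hb, ?_, ?_⟩⟩
  · intro h; have := hmax _ h; simp at this
  · intro h; have := hmax _ h; simp at this

lemma mem_shiftedD {n : ℕ} {lam : ℤ → ℤ} {b : ℤ × ℤ} :
    b ∈ shiftedD n lam ↔ 1 ≤ b.1 ∧ b.1 ≤ (n:ℤ) ∧ 1 ≤ b.2 ∧ b.2 ≤ 2*(n:ℤ) ∧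
      b.1 ≤ b.2 ∧ b.2 ≤ lam b.1 + b.1 - 1 := by
  simp only [shiftedD, Finset.mem_filter, Finset.mem_product, Finset.mem_Icc]
  tauto

lemma part_mono {n : ℕ} {lam : ℤ → ℤ} (h : IsStrictPartition n lam) (k : ℕ) :
    ∀ i : ℤ, 1 ≤ i → 0 < lam (i + k) → lam (i + k) + (i + k) ≤ lam i + i := by
  induction k with
  | zero => intro i hi _; simp
  | succ k ih =>
      intro i hi hpos
      have hcast : i + ((k+1 : ℕ) : ℤ) = (i + k) + 1 := by push_cast; ring
      rw [hcast] at hpos ⊢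
      rcases h.2.2 (i + k) (by omega) with h0 | hlt
      · omega
      · have hpos' : 0 < lam (i + k) := by omega
        have := ih i hi hpos'
        omega

lemma skew_row_contig {n : ℕ} {θ : Finset (ℤ × ℤ)} (hθ : IsShiftedSkewDiagram n θ)
    {i j1 j2 j : ℤ} (h1 : (i, j1) ∈ θ) (h2 : (i, j2) ∈ θ) (hj : j1 ≤ j) (hj' : j ≤ j2) :
    (i, j) ∈ θ := by
  obtain ⟨lam, nu, hlam, hnu, hle, rfl⟩ := hθ
  rw [Finset.mem_sdiff, mem_shiftedD, mem_shiftedD] at h1 h2 ⊢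
  obtain ⟨hn1, hl1⟩ := h1
  obtain ⟨hn2, hl2⟩ := h2
  simp only at hn1 hn2 hl1 hl2 ⊢
  constructor
  · omega
  · intro hl
    omega

lemma skew_col_contig {n : ℕ} {θ : Finset (ℤ × ℤ)} (hθ : IsShiftedSkewDiagram n θ)
    {j i1 i2 i : ℤ} (h1 : (i1, j) ∈ θ) (h2 : (i2, j) ∈ θ) (hi : i1 ≤ i) (hi' : i ≤ i2) :
    (i, j) ∈ θ := by
  obtain ⟨lam, nu, hlam, hnu, hle, rfl⟩ := hθ
  rw [Finset.mem_sdiff, mem_shiftedD, mem_shiftedD] at h1 h2 ⊢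
  obtain ⟨hn1, hl1⟩ := h1
  obtain ⟨hn2, hl2⟩ := h2
  simp only at hn1 hn2 hl1 hl2 ⊢
  have hnu2pos : 0 < nu i2 := by omega
  have hmono : nu i2 + i2 ≤ nu i + i := by
    have hk : i + (((i2 - i).toNat : ℤ)) = i2 := by omega
    have := part_mono hnu (i2 - i).toNat i (by omega) (by rw [hk]; exact hnu2pos)
    rw [hk] at this; exact this
  constructor
  · omega
  · intro hl
    have hlampos : 0 < lam i := by omega
    have hmono2 : lam i + i ≤ lam i1 + i1 := by
      have hk : i1 + (((i - i1).toNat : ℤ)) = i := by omega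
      have := part_mono hlam (i - i1).toNat i1 (by omega) (by rw [hk]; exact hlampos)
      rw [hk] at this; exact this
    omega

lemma arm_corners (θ A : Finset (ℤ × ℤ)) (f g : ℤ → ℤ × ℤ) (lo hi : ℤ)
    (hAform : A = (Finset.Icc lo hi).image f)
    (hf : Function.Injective f)
    (hadjf : ∀ x : ℤ, Adjacent (f x) (f (x+1)))
    (hadjg : ∀ x : ℤ, Adjacent (f x) (g x))
    (hgA : ∀ x : ℤ, g x ∉ A)
    (hse : ∀ x : ℤ, (((f x).1 + 1, (f x).2) = f (x+1) ∧ ((f x).1, (f x).2 + 1) = g x) ∨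
           (((f x).1 + 1, (f x).2) = g x ∧ ((f x).1, (f x).2 + 1) = f (x+1)))
    (hAsub : A ⊆ θ)
    (hclosed : ∀ b ∈ A, ∀ b' ∈ θ, Adjacent b b' → b' ∈ A) :
    ∀ b ∈ A, (b ∈ seCorners θ ↔ b = f hi) := by
  intro b hb
  rw [hAform, Finset.mem_image] at hb
  obtain ⟨x, hx, rfl⟩ := hb
  rw [Finset.mem_Icc] at hx
  have hfxA : f x ∈ A := by
    rw [hAform]; exact Finset.mem_image_of_mem f (Finset.mem_Icc.mpr hx)
  have hsucc_notmem : x = hi → f (x+1) ∉ θ := by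
    intro hxhi hmem
    have hA : f (x+1) ∈ A := hclosed _ hfxA _ hmem (hadjf x)
    rw [hAform, Finset.mem_image] at hA
    obtain ⟨y, hy, hyeq⟩ := hA
    have := hf hyeq
    rw [Finset.mem_Icc] at hy
    omega
  have hg_notmem : g x ∉ θ := fun hmem => hgA x (hclosed _ hfxA _ hmem (hadjg x))
  by_cases hxhi : x = hi
  · subst hxhi
    constructor
    · intro _; rfl
    · intro _
      rw [seCorners, Finset.mem_filter]
      refine ⟨hAsub hfxA, ?_, ?_⟩
      · intro hmem
        rcases hse x with ⟨h1, _⟩ | ⟨h1, _⟩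
        · rw [h1] at hmem; exact hsucc_notmem rfl hmem
        · rw [h1] at hmem; exact hg_notmem hmem
      · intro hmem
        rcases hse x with ⟨_, h2⟩ | ⟨_, h2⟩
        · rw [h2] at hmem; exact hg_notmem hmem
        · rw [h2] at hmem; exact hsucc_notmem rfl hmem
  · constructor
    · intro hcor
      exfalso
      rw [seCorners, Finset.mem_filter] at hcor
      have hfx1A : f (x+1) ∈ A := by
        rw [hAform]
        exact Finset.mem_image_of_mem f (Finset.mem_Icc.mpr ⟨by omega, by omega⟩)
      rcases hse x with ⟨h1, _⟩ | ⟨_, h2⟩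
      · exact hcor.2.1 (by rw [h1]; exact hAsub hfx1A)
      · exact hcor.2.2 (by rw [h2]; exact hAsub hfx1A)
    · intro heq
      exact absurd (hf heq) hxhi

lemma Bcoef_zero_of {θ φ : Finset (ℤ × ℤ)} (hrim : IsRim θ) (hsub : φ ⊆ θ)
    (hne : φ.Nonempty) : Bcoef φ 0 = 0 := by
  rw [Bcoef]
  have h1 : ∀ S ∈ (seCorners φ).powerset,
      ((-1:ℤ))^S.card * hcoef (Nminus (φ \ S)) ((dRim (φ \ S) : ℤ) - 0) = (-1)^S.card := by
    intro S hS
    rw [dRim_of_subset hrim (Finset.sdiff_subset.trans hsub)]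
    rw [hcoef_of_le, mul_one]
    have h2 : Nminus (φ \ S) ≤ (φ \ S).card :=
      le_trans (Nat.sub_le _ _) (ncomp_le_card _)
    push_cast
    omega
  rw [Finset.sum_congr rfl h1]
  rw [Finset.sum_powerset_neg_one_pow_card]
  rw [if_neg (Finset.nonempty_iff_ne_empty.mp (seCorners_nonempty hne))]

lemma Bcoef_one_of {θ φ : Finset (ℤ × ℤ)} (hrim : IsRim θ) (hsub : φ ⊆ θ)
    (hne : φ.Nonempty) :
    Bcoef φ 1 = - ∑ S ∈ (seCorners φ).powerset,
      ((-1:ℤ))^S.card * (if φ \ S = ∅ then 1 else 0) := by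
  rw [Bcoef]
  have h1 : ∀ S ∈ (seCorners φ).powerset,
      ((-1:ℤ))^S.card * hcoef (Nminus (φ \ S)) ((dRim (φ \ S) : ℤ) - 1)
      = (-1)^S.card * (1 - (if φ \ S = ∅ then 1 else 0)) := by
    intro S hS
    rw [dRim_of_subset hrim (Finset.sdiff_subset.trans hsub)]
    by_cases hemp : φ \ S = ∅
    · rw [if_pos hemp, hemp]
      simp only [Finset.card_empty]
      rw [show ((0:ℕ):ℤ) - 1 = -1 from by norm_num]
      rw [hcoef_neg _ (by norm_num)]
      ring
    · rw [if_neg hemp]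
      have hcpos : 1 ≤ (φ \ S).card := Finset.card_pos.mpr (Finset.nonempty_iff_ne_empty.mpr hemp)
      have hNpos : 1 ≤ Ncomp (φ \ S) := by
        rcases Nat.eq_zero_or_pos (Ncomp (φ \ S)) with h | h
        · exact absurd ((ncomp_eq_zero_iff _).mp h) hemp
        · exact h
      have hNle : Ncomp (φ \ S) ≤ (φ \ S).card := ncomp_le_card _
      rw [hcoef_of_le]
      · ring
      · have : Nminus (φ \ S) = Ncomp (φ \ S) - 1 := rfl
        rw [this]
        push_cast
        omega
  rw [Finset.sum_congr rfl h1]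
  have h2 : ∀ S : Finset (ℤ × ℤ), ((-1:ℤ))^S.card * (1 - (if φ \ S = ∅ then 1 else 0))
      = (-1)^S.card - (-1)^S.card * (if φ \ S = ∅ then 1 else 0) := fun S => by ring
  simp only [h2]
  rw [Finset.sum_sub_distrib]
  rw [Finset.sum_powerset_neg_one_pow_card]
  rw [if_neg (Finset.nonempty_iff_ne_empty.mp (seCorners_nonempty hne))]
  ring

end Aux

/-- Let `θ` be a nonempty rim whose north-east arm is not connected to
`θ̂ = θ` minus the arm, with `θ̂ ≠ ∅` and `a = |θ| - |θ̂|`.  Then for every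
integer `p ≥ 1`: if `p < a` then `B(θ,p) = 0`, and if `p ≥ a` then
`B(θ,p) = (2 - δ_{p,a})·(B(θ̂,p-a) - B(θ̂,p-a+1))
          + (1 - δ_{a,1})·(B(θ̂,p-a+2) - B(θ̂,p-a+1))`. -/
theorem Bcoef_arm_disconnected (n : ℕ) (hn : 0 < n) (θ : Finset (ℤ × ℤ))
    (hθ : IsShiftedSkewDiagram n θ) (hrim : IsRim θ) (hne : θ.Nonempty)
    (i0 j0 : ℤ) (hbox : (i0, j0) ∈ θ) (htop : ∀ b ∈ θ, i0 ≤ b.1)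
    (hright : ∀ b ∈ θ, b.1 = i0 → b.2 ≤ j0)
    (s : ℕ) (hs : 1 ≤ s) (harm : IsRowOrCol (armAt θ i0 j0 s))
    (hmax : ∀ s' : ℕ, 1 ≤ s' → IsRowOrCol (armAt θ i0 j0 s') → s' ≤ s)
    (θhat : Finset (ℤ × ℤ)) (hθhat : θhat = θ \ armAt θ i0 j0 s)
    (hhatne : θhat.Nonempty)
    (hconn : ¬ ∃ b ∈ armAt θ i0 j0 s, ∃ b' ∈ θhat, Adjacent b b')
    (a : ℤ) (ha : a = (θ.card : ℤ) - (θhat.card : ℤ))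
    (p : ℤ) (hp : 1 ≤ p) :
    (p < a → Bcoef θ p = 0) ∧
    (a ≤ p → Bcoef θ p =
      (2 - if p = a then 1 else 0) * (Bcoef θhat (p - a) - Bcoef θhat (p - a + 1)) +
      (1 - if a = 1 then 1 else 0) * (Bcoef θhat (p - a + 2) - Bcoef θhat (p - a + 1))) := by
  classical
  set A := armAt θ i0 j0 s with hAdef
  have hAsub : A ⊆ θ := Finset.filter_subset _ _
  have hsle : (1:ℤ) ≤ (s:ℤ) := by exact_mod_cast hs
  have hA00 : (i0, j0) ∈ A := by
    rw [hAdef, armAt, Finset.mem_filter]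
    exact ⟨hbox, le_refl _, by omega, by omega, le_refl _⟩
  have hAmem : ∀ b ∈ A, b ∈ θ ∧ i0 ≤ b.1 ∧ b.1 ≤ i0 + (s:ℤ) - 1 ∧
      j0 - (s:ℤ) + 1 ≤ b.2 ∧ b.2 ≤ j0 := by
    intro b hb
    rw [hAdef, armAt, Finset.mem_filter] at hb
    exact ⟨hb.1, hb.2⟩
  have hclosed : ∀ b ∈ A, ∀ b' ∈ θ, Adjacent b b' → b' ∈ A := by
    intro b hb b' hb' hadj
    by_contra hbA
    exact hconn ⟨b, hb, b', by rw [hθhat, Finset.mem_sdiff]; exact ⟨hb', hbA⟩, hadj⟩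
  have hmemhat : ∀ b : ℤ × ℤ, b ∈ θhat ↔ b ∈ θ ∧ b ∉ A := by
    intro b; rw [hθhat, Finset.mem_sdiff]
  -- structure of the arm
  obtain ⟨c₀, hc₀A, hcorA, hNA, herase⟩ :
      ∃ c₀, c₀ ∈ A ∧ (∀ b ∈ A, (b ∈ seCorners θ ↔ b = c₀)) ∧ Ncomp A = 1 ∧
        ((A.card = 1 ∧ A.erase c₀ = ∅) ∨ (2 ≤ A.card ∧ Ncomp (A.erase c₀) = 1)) := by
    rcases harm with ⟨ir, hrow⟩ | ⟨jc, hcol⟩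
    · -- row case
      have hrow' : ∀ b ∈ A, b.1 = i0 := by
        intro b hb
        rw [hrow b hb, ← hrow (i0, j0) hA00]
      have hJne : (A.image Prod.snd).Nonempty := ⟨j0, Finset.mem_image.mpr ⟨(i0,j0), hA00, rfl⟩⟩
      set c := (A.image Prod.snd).min' hJne with hcdef
      obtain ⟨bc, hbc, hbc2⟩ := Finset.mem_image.mp (Finset.min'_mem _ hJne)
      have hicA : (i0, c) ∈ A := by
        have h1 : bc = (i0, c) := Prod.ext_iff.mpr ⟨hrow' bc hbc, hbc2⟩
        rwa [h1] at hbc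
      have hcle : c ≤ j0 := Finset.min'_le (A.image Prod.snd) j0 (Finset.mem_image.mpr ⟨(i0,j0), hA00, rfl⟩)
      have hc1 : j0 - (s:ℤ) + 1 ≤ c := by simpa using (hAmem _ hicA).2.2.2.1
      have hAform : A = (Finset.Icc c j0).image (fun j => ((i0, j) : ℤ × ℤ)) := by
        ext b
        constructor
        · intro hb
          rw [Finset.mem_image]
          exact ⟨b.2, Finset.mem_Icc.mpr ⟨Finset.min'_le (A.image Prod.snd) b.2 (Finset.mem_image.mpr ⟨b, hb, rfl⟩),
            (hAmem b hb).2.2.2.2⟩, Prod.ext_iff.mpr ⟨(hrow' b hb).symm, rfl⟩⟩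
        · intro hb
          rw [Finset.mem_image] at hb
          obtain ⟨j, hj, rfl⟩ := hb
          rw [Finset.mem_Icc] at hj
          have hθj : (i0, j) ∈ θ :=
            skew_row_contig hθ (hAmem _ hicA).1 (hAmem _ hA00).1 hj.1 hj.2
          rw [hAdef, armAt, Finset.mem_filter]
          exact ⟨hθj, le_refl _, by omega, by omega, hj.2⟩
      have hf : Function.Injective (fun j => ((i0, j) : ℤ × ℤ)) := by
        intro x y h; simpa using h
      have hadjf : ∀ x : ℤ, Adjacent ((i0, x) : ℤ × ℤ) (i0, x+1) := fun x => adjacent_row i0 x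
      have hgA : ∀ x : ℤ, ((i0+1, x) : ℤ × ℤ) ∉ A := by
        intro x h
        have := hrow' _ h
        simp at this
      have hcorA := arm_corners θ A (fun j => ((i0, j) : ℤ × ℤ)) (fun j => ((i0+1, j) : ℤ × ℤ))
        c j0 hAform hf hadjf (fun x => adjacent_col i0 x) hgA
        (fun x => Or.inr ⟨rfl, rfl⟩) hAsub hclosed
      refine ⟨(i0, j0), hA00, hcorA, ?_, ?_⟩
      · rw [hAform]; exact ncomp_seg _ hadjf c j0 hcle
      · have hcard : A.card = (j0 + 1 - c).toNat := by
          rw [hAform, Finset.card_image_of_injective _ hf, Int.card_Icc]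
        have herase' : A.erase (i0, j0) = (Finset.Icc c (j0-1)).image (fun j => ((i0, j) : ℤ × ℤ)) := by
          rw [hAform]; exact seg_erase _ hf c j0
        by_cases hcj : c = j0
        · left
          constructor
          · omega
          · rw [herase', Finset.Icc_eq_empty (by omega), Finset.image_empty]
        · right
          constructor
          · omega
          · rw [herase']; exact ncomp_seg _ hadjf c (j0-1) (by omega)
    · -- column case
      have hcol' : ∀ b ∈ A, b.2 = j0 := by
        intro b hb
        rw [hcol b hb, ← hcol (i0, j0) hA00]
      have hIne : (A.image Prod.fst).Nonempty := ⟨i0, Finset.mem_image.mpr ⟨(i0,j0), hA00, rfl⟩⟩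
      set r := (A.image Prod.fst).max' hIne with hrdef
      obtain ⟨br, hbr, hbr2⟩ := Finset.mem_image.mp (Finset.max'_mem _ hIne)
      have hirA : (r, j0) ∈ A := by
        have h1 : br = (r, j0) := Prod.ext_iff.mpr ⟨hbr2, hcol' br hbr⟩
        rwa [h1] at hbr
      have hile : i0 ≤ r := by
        rw [hrdef]; exact Finset.le_max' (A.image Prod.fst) i0 (Finset.mem_image.mpr ⟨(i0,j0), hA00, rfl⟩)
      have hr1 : r ≤ i0 + (s:ℤ) - 1 := by simpa using (hAmem _ hirA).2.2.1
      have hAform : A = (Finset.Icc i0 r).image (fun i => ((i, j0) : ℤ × ℤ)) := by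
        ext b
        constructor
        · intro hb
          rw [Finset.mem_image]
          refine ⟨b.1, Finset.mem_Icc.mpr ⟨(hAmem b hb).2.1, ?_⟩,
            Prod.ext_iff.mpr ⟨rfl, (hcol' b hb).symm⟩⟩
          rw [hrdef]; exact Finset.le_max' (A.image Prod.fst) b.1 (Finset.mem_image.mpr ⟨b, hb, rfl⟩)
        · intro hb
          rw [Finset.mem_image] at hb
          obtain ⟨i, hi, rfl⟩ := hb
          rw [Finset.mem_Icc] at hi
          have hθi : (i, j0) ∈ θ :=
            skew_col_contig hθ (hAmem _ hA00).1 (hAmem _ hirA).1 hi.1 hi.2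
          rw [hAdef, armAt, Finset.mem_filter]
          exact ⟨hθi, hi.1, by omega, by omega, le_refl _⟩
      have hf : Function.Injective (fun i => ((i, j0) : ℤ × ℤ)) := by
        intro x y h; simpa using h
      have hadjf : ∀ x : ℤ, Adjacent ((x, j0) : ℤ × ℤ) (x+1, j0) := fun x => adjacent_col x j0
      have hgA : ∀ x : ℤ, ((x, j0+1) : ℤ × ℤ) ∉ A := by
        intro x h
        have := hcol' _ h
        simp at this
      have hcorA := arm_corners θ A (fun i => ((i, j0) : ℤ × ℤ)) (fun i => ((i, j0+1) : ℤ × ℤ))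
        i0 r hAform hf hadjf (fun x => adjacent_row x j0) hgA
        (fun x => Or.inl ⟨rfl, rfl⟩) hAsub hclosed
      refine ⟨(r, j0), hirA, hcorA, ?_, ?_⟩
      · rw [hAform]; exact ncomp_seg _ hadjf i0 r hile
      · have hcard : A.card = (r + 1 - i0).toNat := by
          rw [hAform, Finset.card_image_of_injective _ hf, Int.card_Icc]
        have herase' : A.erase (r, j0) = (Finset.Icc i0 (r-1)).image (fun i => ((i, j0) : ℤ × ℤ)) := by
          rw [hAform]; exact seg_erase _ hf i0 r
        by_cases hir : i0 = r
        · left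
          constructor
          · omega
          · rw [herase', Finset.Icc_eq_empty (by omega), Finset.image_empty]
        · right
          constructor
          · omega
          · rw [herase']; exact ncomp_seg _ hadjf i0 (r-1) (by omega)
  -- basic facts about θhat
  have hhatsub : θhat ⊆ θ := by rw [hθhat]; exact Finset.sdiff_subset
  have hdisjAhat : Disjoint A θhat := by rw [hθhat]; exact Finset.disjoint_sdiff
  have hnadj : ∀ b ∈ A, ∀ b' ∈ θhat, ¬ Adjacent b b' :=
    fun b hb b' hb' hadj => hconn ⟨b, hb, b', hb', hadj⟩
  have hc₀hat : c₀ ∉ θhat := fun h => Finset.disjoint_left.mp hdisjAhat hc₀A h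
  have hCsub : seCorners θhat ⊆ θhat := Finset.filter_subset _ _
  have hc₀C : c₀ ∉ seCorners θhat := fun h => hc₀hat (hCsub h)
  have hhatiff : ∀ b ∈ θhat, (b ∈ seCorners θ ↔ b ∈ seCorners θhat) := by
    intro b hb
    obtain ⟨b1, b2⟩ := b
    have h1 : ((b1 + 1, b2) : ℤ × ℤ) ∈ θ ↔ ((b1 + 1, b2) : ℤ × ℤ) ∈ θhat := by
      constructor
      · intro h
        rw [hmemhat]
        exact ⟨h, fun hA' => hnadj _ hA' _ hb (adjacent_symm (adjacent_col b1 b2))⟩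
      · exact fun h => hhatsub h
    have h2 : ((b1, b2 + 1) : ℤ × ℤ) ∈ θ ↔ ((b1, b2 + 1) : ℤ × ℤ) ∈ θhat := by
      constructor
      · intro h
        rw [hmemhat]
        exact ⟨h, fun hA' => hnadj _ hA' _ hb (adjacent_symm (adjacent_row b1 b2))⟩
      · exact fun h => hhatsub h
    rw [seCorners, seCorners, Finset.mem_filter, Finset.mem_filter]
    constructor
    · rintro ⟨_, hx, hy⟩
      exact ⟨hb, (not_congr h1).mp hx, (not_congr h2).mp hy⟩
    · rintro ⟨_, hx, hy⟩
      exact ⟨hhatsub hb, (not_congr h1).mpr hx, (not_congr h2).mpr hy⟩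
  have hcornersplit : seCorners θ = insert c₀ (seCorners θhat) := by
    ext b
    rw [Finset.mem_insert]
    constructor
    · intro hb
      have hbθ : b ∈ θ := Finset.filter_subset _ _ hb
      by_cases hbA : b ∈ A
      · exact Or.inl ((hcorA b hbA).mp hb)
      · exact Or.inr ((hhatiff b ((hmemhat b).mpr ⟨hbθ, hbA⟩)).mp hb)
    · rintro (rfl | hb)
      · exact (hcorA _ hc₀A).mpr rfl
      · exact (hhatiff b (hCsub hb)).mpr hb
  have hcards : θhat.card = θ.card - A.card := by rw [hθhat]; exact Finset.card_sdiff_of_subset hAsub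
  have hcardle : A.card ≤ θ.card := Finset.card_le_card hAsub
  have haA : (A.card : ℤ) = a := by rw [ha]; omega
  have hSfacts : ∀ S ∈ (seCorners θhat).powerset,
      (θ \ S = A ∪ (θhat \ S)) ∧
      (θ \ insert c₀ S = (A.erase c₀) ∪ (θhat \ S)) ∧
      c₀ ∉ S ∧
      Ncomp (θ \ S) = 1 + Ncomp (θhat \ S) ∧
      dRim (θ \ S) = A.card + (θhat \ S).card ∧
      dRim (θ \ insert c₀ S) = (A.card - 1) + (θhat \ S).card := by
    intro S hS
    have hSsub : S ⊆ θhat := (Finset.mem_powerset.mp hS).trans hCsub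
    have hc₀S : c₀ ∉ S := fun h => hc₀hat (hSsub h)
    have eq1 : θ \ S = A ∪ (θhat \ S) := by
      ext b
      rw [Finset.mem_sdiff, Finset.mem_union, Finset.mem_sdiff, hmemhat]
      constructor
      · rintro ⟨hbθ, hbS⟩
        by_cases hbA : b ∈ A
        · exact Or.inl hbA
        · exact Or.inr ⟨⟨hbθ, hbA⟩, hbS⟩
      · rintro (hbA | ⟨⟨hbθ, hbA⟩, hbS⟩)
        · exact ⟨hAsub hbA, fun hbS => ((hmemhat b).mp (hSsub hbS)).2 hbA⟩
        · exact ⟨hbθ, hbS⟩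
    have eq2 : θ \ insert c₀ S = (A.erase c₀) ∪ (θhat \ S) := by
      ext b
      rw [Finset.mem_sdiff, Finset.mem_union, Finset.mem_erase, Finset.mem_sdiff, hmemhat,
        Finset.mem_insert]
      constructor
      · rintro ⟨hbθ, hbS⟩
        push_neg at hbS
        by_cases hbA : b ∈ A
        · exact Or.inl ⟨hbS.1, hbA⟩
        · exact Or.inr ⟨⟨hbθ, hbA⟩, hbS.2⟩
      · rintro (⟨hne', hbA⟩ | ⟨⟨hbθ, hbA⟩, hbS⟩)
        · refine ⟨hAsub hbA, ?_⟩
          rintro (rfl | hbS)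
          · exact hne' rfl
          · exact ((hmemhat b).mp (hSsub hbS)).2 hbA
        · refine ⟨hbθ, ?_⟩
          rintro (rfl | hbS')
          · exact hbA hc₀A
          · exact hbS hbS'
    have hdisj1 : Disjoint A (θhat \ S) := hdisjAhat.mono_right Finset.sdiff_subset
    refine ⟨eq1, eq2, hc₀S, ?_, ?_, ?_⟩
    · rw [eq1, ncomp_union hdisj1
        (fun b hb b' hb' => hnadj b hb b' (Finset.sdiff_subset hb')), hNA]
    · rw [dRim_of_subset hrim Finset.sdiff_subset, eq1, Finset.card_union_of_disjoint hdisj1]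
    · rw [dRim_of_subset hrim Finset.sdiff_subset, eq2,
        Finset.card_union_of_disjoint (hdisj1.mono_left (Finset.erase_subset _ _)),
        Finset.card_erase_of_mem hc₀A]
  have hsum : Bcoef θ p = ∑ S ∈ (seCorners θhat).powerset,
      (((-1:ℤ))^S.card * hcoef (Nminus (θ \ S)) ((dRim (θ \ S) : ℤ) - p)
       + ((-1:ℤ))^(insert c₀ S).card *
          hcoef (Nminus (θ \ insert c₀ S)) ((dRim (θ \ insert c₀ S) : ℤ) - p)) := by
    rw [Bcoef, hcornersplit, Finset.sum_powerset_insert hc₀C, ← Finset.sum_add_distrib]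
  have hdhat : ∀ S : Finset (ℤ × ℤ), dRim (θhat \ S) = (θhat \ S).card :=
    fun S => dRim_of_subset hrim (Finset.sdiff_subset.trans hhatsub)
  constructor
  · -- p < a
    intro hlt
    rcases herase with ⟨h1, _⟩ | ⟨hA2, hNer⟩
    · exfalso; omega
    · rw [hsum]
      apply Finset.sum_eq_zero
      intro S hS
      obtain ⟨eq1, eq2, hc₀S, hNc1, hd1, hd2⟩ := hSfacts S hS
      have hNc2 : Ncomp (θ \ insert c₀ S) = 1 + Ncomp (θhat \ S) := by
        rw [eq2, ncomp_union ((hdisjAhat.mono_right Finset.sdiff_subset).mono_left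
            (Finset.erase_subset _ _))
          (fun b hb b' hb' => hnadj b (Finset.erase_subset _ _ hb) b' (Finset.sdiff_subset hb')),
          hNer]
      have hNm1 : Nminus (θ \ S) = Ncomp (θhat \ S) := by unfold Nminus; rw [hNc1]; omega
      have hNm2 : Nminus (θ \ insert c₀ S) = Ncomp (θhat \ S) := by unfold Nminus; rw [hNc2]; omega
      have hNle := ncomp_le_card (θhat \ S)
      have t1 : hcoef (Nminus (θ \ S)) ((dRim (θ \ S) : ℤ) - p) = 1 := by
        rw [hNm1]; apply hcoef_of_le; rw [hd1]; push_cast; omega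
      have t2 : hcoef (Nminus (θ \ insert c₀ S)) ((dRim (θ \ insert c₀ S) : ℤ) - p) = 1 := by
        rw [hNm2]; apply hcoef_of_le; rw [hd2]; omega
      rw [t1, t2, Finset.card_insert_of_notMem hc₀S, pow_succ]
      ring
  · -- a ≤ p
    intro hap
    rcases herase with ⟨hA1, hAer⟩ | ⟨hA2, hNer⟩
    · -- a = 1
      have ha1 : a = 1 := by omega
      subst ha1
      have key : ∀ S ∈ (seCorners θhat).powerset,
          ((-1:ℤ))^S.card * hcoef (Nminus (θ \ S)) ((dRim (θ \ S) : ℤ) - p)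
          + ((-1:ℤ))^(insert c₀ S).card *
              hcoef (Nminus (θ \ insert c₀ S)) ((dRim (θ \ insert c₀ S) : ℤ) - p)
          = 2 * (((-1:ℤ))^S.card * hcoef (Nminus (θhat \ S)) ((dRim (θhat \ S) : ℤ) - (p - 1)))
            - 2 * (((-1:ℤ))^S.card * hcoef (Nminus (θhat \ S)) ((dRim (θhat \ S) : ℤ) - p))
            - (if p = 1 then ((-1:ℤ))^S.card * (if θhat \ S = ∅ then 1 else 0) else 0) := by
        intro S hS
        obtain ⟨eq1, eq2, hc₀S, hNc1, hd1, hd2⟩ := hSfacts S hS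
        have hins : θ \ insert c₀ S = θhat \ S := by rw [eq2, hAer, Finset.empty_union]
        have hNm1 : Nminus (θ \ S) = Ncomp (θhat \ S) := by unfold Nminus; rw [hNc1]; omega
        have hNle := ncomp_le_card (θhat \ S)
        have hN0 := ncomp_eq_zero_iff (θhat \ S)
        have harg1 : (dRim (θ \ S) : ℤ) - p = (((θhat \ S).card : ℤ)) - (p - 1) := by
          rw [hd1]; omega
        rw [harg1, hNm1, hins, hdhat S, Finset.card_insert_of_notMem hc₀S, pow_succ]
        rw [hcoef_key (Ncomp (θhat \ S)) ((((θhat \ S).card : ℤ)) - (p - 1))]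
        have hNmdef : Nminus (θhat \ S) = Ncomp (θhat \ S) - 1 := rfl
        rw [hNmdef]
        rw [show (((θhat \ S).card : ℤ)) - (p - 1) - 1 = (((θhat \ S).card : ℤ)) - p from by ring]
        have hiff : (Ncomp (θhat \ S) = 0 ∧ (((θhat \ S).card : ℤ)) - (p - 1) = 0)
            ↔ (p = 1 ∧ θhat \ S = ∅) := by
          constructor
          · rintro ⟨hz, h2⟩
            have hemp := hN0.mp hz
            have hc0 : (θhat \ S).card = 0 := by rw [hemp]; exact Finset.card_empty
            exact ⟨by omega, hemp⟩
          · rintro ⟨hp1, hemp⟩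
            have hc0 : (θhat \ S).card = 0 := by rw [hemp]; exact Finset.card_empty
            exact ⟨hN0.mpr hemp, by omega⟩
        rw [if_congr hiff rfl rfl]
        by_cases hp1 : p = 1
        · by_cases hemp : θhat \ S = ∅
          · rw [if_pos ⟨hp1, hemp⟩, if_pos hp1, if_pos hemp]; ring
          · rw [if_neg (fun h => hemp h.2), if_pos hp1, if_neg hemp]; ring
        · rw [if_neg (fun h => hp1 h.1), if_neg hp1]; ring
      rw [hsum, Finset.sum_congr rfl key]
      rw [Finset.sum_sub_distrib, Finset.sum_sub_distrib, ← Finset.mul_sum, ← Finset.mul_sum]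
      have hB1 : ∑ S ∈ (seCorners θhat).powerset,
          ((-1:ℤ))^S.card * hcoef (Nminus (θhat \ S)) ((dRim (θhat \ S) : ℤ) - (p-1))
          = Bcoef θhat (p-1) := by rw [Bcoef]
      have hB2 : ∑ S ∈ (seCorners θhat).powerset,
          ((-1:ℤ))^S.card * hcoef (Nminus (θhat \ S)) ((dRim (θhat \ S) : ℤ) - p)
          = Bcoef θhat p := by rw [Bcoef]
      have hW : ∑ S ∈ (seCorners θhat).powerset,
          (if p = 1 then ((-1:ℤ))^S.card * (if θhat \ S = ∅ then 1 else 0) else 0)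
          = if p = 1 then (∑ S ∈ (seCorners θhat).powerset,
              ((-1:ℤ))^S.card * (if θhat \ S = ∅ then 1 else 0)) else 0 := by
        by_cases hp1 : p = 1
        · simp only [if_pos hp1]
        · simp only [if_neg hp1, Finset.sum_const_zero]
      rw [hB1, hB2, hW]
      rw [if_pos rfl]
      by_cases hp1 : p = 1
      · subst hp1
        rw [if_pos rfl, if_pos rfl]
        have h0 : Bcoef θhat ((1:ℤ)-1) = 0 := by
          rw [show (1:ℤ)-1 = 0 from by norm_num]
          exact Bcoef_zero_of hrim hhatsub hhatne
        have h1 : Bcoef θhat 1 = - ∑ S ∈ (seCorners θhat).powerset,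
            ((-1:ℤ))^S.card * (if θhat \ S = ∅ then 1 else 0) :=
          Bcoef_one_of hrim hhatsub hhatne
        rw [show (1:ℤ)-1+1 = 1 from by norm_num, show (1:ℤ)-1+2 = 2 from by norm_num]
        rw [h0] at *
        linarith [h1]
      · rw [if_neg hp1, if_neg hp1]
        rw [show p-1+1 = p from by ring]
        ring
    · -- 2 ≤ A.card, so 2 ≤ a
      have ha2 : 2 ≤ a := by omega
      have key : ∀ S ∈ (seCorners θhat).powerset,
          ((-1:ℤ))^S.card * hcoef (Nminus (θ \ S)) ((dRim (θ \ S) : ℤ) - p)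
          + ((-1:ℤ))^(insert c₀ S).card *
              hcoef (Nminus (θ \ insert c₀ S)) ((dRim (θ \ insert c₀ S) : ℤ) - p)
          = 2 * (((-1:ℤ))^S.card * hcoef (Nminus (θhat \ S)) ((dRim (θhat \ S) : ℤ) - (p - a)))
            - 3 * (((-1:ℤ))^S.card * hcoef (Nminus (θhat \ S)) ((dRim (θhat \ S) : ℤ) - (p - a + 1)))
            + (((-1:ℤ))^S.card * hcoef (Nminus (θhat \ S)) ((dRim (θhat \ S) : ℤ) - (p - a + 2)))
            - (if p = a then ((-1:ℤ))^S.card * (if θhat \ S = ∅ then 1 else 0) else 0) := by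
        intro S hS
        obtain ⟨eq1, eq2, hc₀S, hNc1, hd1, hd2⟩ := hSfacts S hS
        have hNc2 : Ncomp (θ \ insert c₀ S) = 1 + Ncomp (θhat \ S) := by
          rw [eq2, ncomp_union ((hdisjAhat.mono_right Finset.sdiff_subset).mono_left
              (Finset.erase_subset _ _))
            (fun b hb b' hb' => hnadj b (Finset.erase_subset _ _ hb) b' (Finset.sdiff_subset hb')),
            hNer]
        have hNm1 : Nminus (θ \ S) = Ncomp (θhat \ S) := by unfold Nminus; rw [hNc1]; omega
        have hNm2 : Nminus (θ \ insert c₀ S) = Ncomp (θhat \ S) := by unfold Nminus; rw [hNc2]; omega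
        have hNle := ncomp_le_card (θhat \ S)
        have hN0 := ncomp_eq_zero_iff (θhat \ S)
        have harg1 : (dRim (θ \ S) : ℤ) - p = (((θhat \ S).card : ℤ)) - (p - a) := by
          rw [hd1]; push_cast; omega
        have harg2 : (dRim (θ \ insert c₀ S) : ℤ) - p = (((θhat \ S).card : ℤ)) - (p - a) - 1 := by
          rw [hd2]; omega
        rw [harg1, harg2, hNm1, hNm2, Finset.card_insert_of_notMem hc₀S, pow_succ, hdhat S]
        rw [hcoef_key (Ncomp (θhat \ S)) ((((θhat \ S).card : ℤ)) - (p - a)),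
            hcoef_key (Ncomp (θhat \ S)) ((((θhat \ S).card : ℤ)) - (p - a) - 1)]
        have hNmdef : Nminus (θhat \ S) = Ncomp (θhat \ S) - 1 := rfl
        rw [hNmdef]
        rw [show (((θhat \ S).card : ℤ)) - (p - a + 1) = (((θhat \ S).card : ℤ)) - (p - a) - 1 from by ring,
            show (((θhat \ S).card : ℤ)) - (p - a + 2) = (((θhat \ S).card : ℤ)) - (p - a) - 1 - 1 from by ring]
        have hiff : (Ncomp (θhat \ S) = 0 ∧ (((θhat \ S).card : ℤ)) - (p - a) = 0)
            ↔ (p = a ∧ θhat \ S = ∅) := by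
          constructor
          · rintro ⟨hz, h2⟩
            have hemp := hN0.mp hz
            have hc0 : (θhat \ S).card = 0 := by rw [hemp]; exact Finset.card_empty
            exact ⟨by omega, hemp⟩
          · rintro ⟨hpa, hemp⟩
            have hc0 : (θhat \ S).card = 0 := by rw [hemp]; exact Finset.card_empty
            exact ⟨hN0.mpr hemp, by omega⟩
        have hneg2 : ¬(Ncomp (θhat \ S) = 0 ∧ (((θhat \ S).card : ℤ)) - (p - a) - 1 = 0) := by
          rintro ⟨hz, h2⟩
          have hemp := hN0.mp hz
          have hc0 : (θhat \ S).card = 0 := by rw [hemp]; exact Finset.card_empty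
          omega
        rw [if_congr hiff rfl rfl, if_neg hneg2]
        by_cases hpa : p = a
        · by_cases hemp : θhat \ S = ∅
          · rw [if_pos ⟨hpa, hemp⟩, if_pos hpa, if_pos hemp]; ring
          · rw [if_neg (fun h => hemp h.2), if_pos hpa, if_neg hemp]; ring
        · rw [if_neg (fun h => hpa h.1), if_neg hpa]; ring
      rw [hsum, Finset.sum_congr rfl key]
      rw [Finset.sum_sub_distrib, Finset.sum_add_distrib, Finset.sum_sub_distrib,
        ← Finset.mul_sum, ← Finset.mul_sum]
      have hB1 : ∑ S ∈ (seCorners θhat).powerset,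
          ((-1:ℤ))^S.card * hcoef (Nminus (θhat \ S)) ((dRim (θhat \ S) : ℤ) - (p-a))
          = Bcoef θhat (p-a) := by rw [Bcoef]
      have hB2 : ∑ S ∈ (seCorners θhat).powerset,
          ((-1:ℤ))^S.card * hcoef (Nminus (θhat \ S)) ((dRim (θhat \ S) : ℤ) - (p-a+1))
          = Bcoef θhat (p-a+1) := by rw [Bcoef]
      have hB3 : ∑ S ∈ (seCorners θhat).powerset,
          ((-1:ℤ))^S.card * hcoef (Nminus (θhat \ S)) ((dRim (θhat \ S) : ℤ) - (p-a+2))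
          = Bcoef θhat (p-a+2) := by rw [Bcoef]
      have hW : ∑ S ∈ (seCorners θhat).powerset,
          (if p = a then ((-1:ℤ))^S.card * (if θhat \ S = ∅ then 1 else 0) else 0)
          = if p = a then (∑ S ∈ (seCorners θhat).powerset,
              ((-1:ℤ))^S.card * (if θhat \ S = ∅ then 1 else 0)) else 0 := by
        by_cases hpa : p = a
        · simp only [if_pos hpa]
        · simp only [if_neg hpa, Finset.sum_const_zero]
      rw [hB1, hB2, hB3, hW]
      have ha1' : ¬ (a = (1:ℤ)) := by omega
      rw [if_neg ha1']
      by_cases hpa : p = a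
      · rw [if_pos hpa, if_pos hpa]
        have h0 : Bcoef θhat (p - a) = 0 := by
          rw [show p - a = 0 from by omega]
          exact Bcoef_zero_of hrim hhatsub hhatne
        have h1 : Bcoef θhat (p - a + 1) = - ∑ S ∈ (seCorners θhat).powerset,
            ((-1:ℤ))^S.card * (if θhat \ S = ∅ then 1 else 0) := by
          rw [show p - a + 1 = 1 from by omega]
          exact Bcoef_one_of hrim hhatsub hhatne
        rw [h0, h1]
        ring
      · rw [if_neg hpa, if_neg hpa]
        ring
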